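/- Let μ₁ and μ₂ be Borel probability measures on ℝ with μ₂ absolutely continuous with respect to μ₁, and J = dμ₂/dμ₁. Then for μ₁-almost every x, J(x) = lim of μ₂(I)/μ₁(I) as I ranges over open intervals containing x with |I| → 0. Moreover, if q(x) = sup{ μ₂(I)/μ₁(I) : I an open interval containing x }, then log⁺(q) = max(log q, 0) is integrable with respect to μ₁. -/

import Mathlib

open MeasureTheory
open Set
open scoped ENNReal

section Aux
-- three open intervals with a common point: one is inside the union of the other two
lemma two_cover {a₁ b₁ a₂ b₂ a₃ b₃ x : ℝ} (h₁ : x ∈ Ioo a₁ b₁) (h₂ : x ∈ Ioo a₂ b₂)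
    (h₃ : x ∈ Ioo a₃ b₃) (ha : a₂ ≤ a₁) (hb : b₁ ≤ b₃) :
    Ioo a₁ b₁ ⊆ Ioo a₂ b₂ ∪ Ioo a₃ b₃ := by
  intro y hy
  rcases le_total y x with h | h
  · exact Or.inl ⟨lt_of_le_of_lt ha hy.1, lt_of_le_of_lt h h₂.2⟩
  · exact Or.inr ⟨lt_of_lt_of_le h₃.1 h, lt_of_lt_of_le hy.2 hb⟩

lemma three_lemma {a₁ b₁ a₂ b₂ a₃ b₃ x : ℝ} (h₁ : x ∈ Ioo a₁ b₁) (h₂ : x ∈ Ioo a₂ b₂)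
    (h₃ : x ∈ Ioo a₃ b₃) :
    Ioo a₁ b₁ ⊆ Ioo a₂ b₂ ∪ Ioo a₃ b₃ ∨ Ioo a₂ b₂ ⊆ Ioo a₁ b₁ ∪ Ioo a₃ b₃ ∨
    Ioo a₃ b₃ ⊆ Ioo a₁ b₁ ∪ Ioo a₂ b₂ := by
  rcases le_total a₁ a₂ with hA | hA <;> rcases le_total a₁ a₃ with hB | hB <;>
    rcases le_total a₂ a₃ with hC | hC <;> rcases le_total b₁ b₂ with hD | hD <;>
    rcases le_total b₁ b₃ with hE | hE <;> rcases le_total b₂ b₃ with hF | hF <;>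
  first
    | (exact Or.inl (two_cover h₁ h₂ h₃ (by linarith) (by linarith)))
    | (exact Or.inl ((two_cover h₁ h₃ h₂ (by linarith) (by linarith)).trans (by rw [Set.union_comm])))
    | (exact Or.inr (Or.inl (two_cover h₂ h₁ h₃ (by linarith) (by linarith))))
    | (exact Or.inr (Or.inl ((two_cover h₂ h₃ h₁ (by linarith) (by linarith)).trans (by rw [Set.union_comm]))))
    | (exact Or.inr (Or.inr (two_cover h₃ h₁ h₂ (by linarith) (by linarith))))
    | (exact Or.inr (Or.inr ((two_cover h₃ h₂ h₁ (by linarith) (by linarith)).trans (by rw [Set.union_comm]))))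

lemma subcover_mult2 (S : Finset (ℝ × ℝ)) (K : Set ℝ)
    (hK : K ⊆ ⋃ p ∈ S, Ioo p.1 p.2) :
    ∃ T ⊆ S, (K ⊆ ⋃ p ∈ T, Ioo p.1 p.2) ∧
      ∀ x : ℝ, (T.filter (fun p => x ∈ Ioo p.1 p.2)).card ≤ 2 := by
  induction S using Finset.strongInduction with
  | _ S ih =>
    by_cases h : ∃ p ∈ S, K ⊆ ⋃ q ∈ S.erase p, Ioo q.1 q.2
    · obtain ⟨p, hp, hcov⟩ := h
      obtain ⟨T, hTS, hT⟩ := ih (S.erase p) (Finset.erase_ssubset hp) hcov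
      exact ⟨T, hTS.trans (Finset.erase_subset _ _), hT⟩
    · refine ⟨S, Finset.Subset.refl _, hK, fun x => ?_⟩
      by_contra hc
      push_neg at hc
      obtain ⟨p₁, p₂, p₃, hp₁, hp₂, hp₃, h12, h13, h23⟩ := Finset.two_lt_card_iff.1 hc
      simp only [Finset.mem_filter] at hp₁ hp₂ hp₃
      have key : ∃ p ∈ S, K ⊆ ⋃ q ∈ S.erase p, Ioo q.1 q.2 := by
        rcases three_lemma hp₁.2 hp₂.2 hp₃.2 with hsub | hsub | hsub
        · refine ⟨p₁, hp₁.1, fun y hy => ?_⟩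
          rcases Set.mem_iUnion₂.1 (hK hy) with ⟨q, hq, hyq⟩
          by_cases hqp : q = p₁
          · subst hqp
            rcases hsub hyq with h | h
            · exact Set.mem_iUnion₂.2 ⟨p₂, Finset.mem_erase.2 ⟨(Ne.symm h12), hp₂.1⟩, h⟩
            · exact Set.mem_iUnion₂.2 ⟨p₃, Finset.mem_erase.2 ⟨(Ne.symm h13), hp₃.1⟩, h⟩
          · exact Set.mem_iUnion₂.2 ⟨q, Finset.mem_erase.2 ⟨hqp, hq⟩, hyq⟩
        · refine ⟨p₂, hp₂.1, fun y hy => ?_⟩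
          rcases Set.mem_iUnion₂.1 (hK hy) with ⟨q, hq, hyq⟩
          by_cases hqp : q = p₂
          · subst hqp
            rcases hsub hyq with h | h
            · exact Set.mem_iUnion₂.2 ⟨p₁, Finset.mem_erase.2 ⟨h12, hp₁.1⟩, h⟩
            · exact Set.mem_iUnion₂.2 ⟨p₃, Finset.mem_erase.2 ⟨(Ne.symm h23), hp₃.1⟩, h⟩
          · exact Set.mem_iUnion₂.2 ⟨q, Finset.mem_erase.2 ⟨hqp, hq⟩, hyq⟩
        · refine ⟨p₃, hp₃.1, fun y hy => ?_⟩
          rcases Set.mem_iUnion₂.1 (hK hy) with ⟨q, hq, hyq⟩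
          by_cases hqp : q = p₃
          · subst hqp
            rcases hsub hyq with h | h
            · exact Set.mem_iUnion₂.2 ⟨p₁, Finset.mem_erase.2 ⟨h13, hp₁.1⟩, h⟩
            · exact Set.mem_iUnion₂.2 ⟨p₂, Finset.mem_erase.2 ⟨h23, hp₂.1⟩, h⟩
          · exact Set.mem_iUnion₂.2 ⟨q, Finset.mem_erase.2 ⟨hqp, hq⟩, hyq⟩
      exact h key

lemma sum_le_two_mul (T : Finset (ℝ × ℝ)) (ν : Measure ℝ) [IsFiniteMeasure ν]
    (hmult : ∀ x : ℝ, (T.filter (fun p => x ∈ Ioo p.1 p.2)).card ≤ 2) :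
    ∑ p ∈ T, ν (Ioo p.1 p.2) ≤ 2 * ν Set.univ := by
  have h1 : ∀ p ∈ T, ν (Ioo p.1 p.2) = ∫⁻ x, (Ioo p.1 p.2).indicator (fun _ => (1:ℝ≥0∞)) x ∂ν := by
    intro p _
    rw [lintegral_indicator measurableSet_Ioo]
    simp
  rw [Finset.sum_congr rfl h1, ← lintegral_finset_sum]
  · have h2 : ∀ x : ℝ, ∑ p ∈ T, (Ioo p.1 p.2).indicator (fun _ => (1:ℝ≥0∞)) x ≤ 2 := by
      intro x
      have : ∑ p ∈ T, (Ioo p.1 p.2).indicator (fun _ => (1:ℝ≥0∞)) x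
          = ((T.filter (fun p => x ∈ Ioo p.1 p.2)).card : ℝ≥0∞) := by
        rw [Finset.card_filter]
        push_cast
        refine Finset.sum_congr rfl fun p _ => ?_
        by_cases h : x ∈ Ioo p.1 p.2 <;> simp [Set.indicator, h]
      rw [this]
      exact_mod_cast Nat.cast_le.2 (hmult x) |>.trans (by norm_num)
    calc ∫⁻ x, ∑ p ∈ T, (Ioo p.1 p.2).indicator (fun _ => (1:ℝ≥0∞)) x ∂ν
        ≤ ∫⁻ _, 2 ∂ν := lintegral_mono h2
      _ = 2 * ν Set.univ := by rw [lintegral_const]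
  · exact fun p _ => (measurable_const.indicator measurableSet_Ioo)

lemma weak_bound (μ ρ : Measure ℝ) [IsFiniteMeasure μ] [IsFiniteMeasure ρ] (t : ℝ≥0∞) :
    t * μ {x | ∃ a b : ℝ, a < x ∧ x < b ∧ t * μ (Ioo a b) < ρ (Ioo a b)} ≤ 2 * ρ Set.univ := by
  set E := {x | ∃ a b : ℝ, a < x ∧ x < b ∧ t * μ (Ioo a b) < ρ (Ioo a b)} with hEdef
  set P := {p : ℝ × ℝ | t * μ (Ioo p.1 p.2) < ρ (Ioo p.1 p.2)} with hPdef
  have hEeq : E = ⋃ p : P, Ioo (p : ℝ × ℝ).1 (p : ℝ × ℝ).2 := by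
    ext x
    simp only [hEdef, mem_setOf_eq, mem_iUnion, Subtype.exists, Prod.exists]
    constructor
    · rintro ⟨a, b, h1, h2, h3⟩
      exact ⟨a, b, h3, h1, h2⟩
    · rintro ⟨a, b, h3, h1, h2⟩
      exact ⟨a, b, h1, h2, h3⟩
  have hEopen : IsOpen E := by
    rw [hEeq]; exact isOpen_iUnion fun p => isOpen_Ioo
  have key : ∀ K : Set ℝ, IsCompact K → K ⊆ E → t * μ K ≤ 2 * ρ Set.univ := by
    intro K hKc hKE
    have hcov : K ⊆ ⋃ p : P, Ioo (p : ℝ × ℝ).1 (p : ℝ × ℝ).2 := hEeq ▸ hKE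
    obtain ⟨s, hs⟩ := hKc.elim_finite_subcover (fun p : P => Ioo (p : ℝ × ℝ).1 (p : ℝ × ℝ).2)
      (fun p => isOpen_Ioo) hcov
    set S : Finset (ℝ × ℝ) := s.image Subtype.val with hSdef
    have hScov : K ⊆ ⋃ p ∈ S, Ioo p.1 p.2 := by
      intro x hx
      rcases mem_iUnion₂.1 (hs hx) with ⟨p, hp, hxp⟩
      exact mem_iUnion₂.2 ⟨(p : ℝ × ℝ), Finset.mem_image_of_mem _ hp, hxp⟩
    have hSP : ∀ p ∈ S, p ∈ P := by
      intro p hp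
      rcases Finset.mem_image.1 hp with ⟨q, _, rfl⟩
      exact q.2
    obtain ⟨T, hTS, hTcov, hTmult⟩ := subcover_mult2 S K hScov
    calc t * μ K ≤ t * ∑ p ∈ T, μ (Ioo p.1 p.2) := by
          refine mul_le_mul_right ?_ t
          exact (measure_mono hTcov).trans (measure_biUnion_finset_le T _)
      _ = ∑ p ∈ T, t * μ (Ioo p.1 p.2) := Finset.mul_sum _ _ _
      _ ≤ ∑ p ∈ T, ρ (Ioo p.1 p.2) :=
          Finset.sum_le_sum fun p hp => (hSP p (hTS hp)).le
      _ ≤ 2 * ρ Set.univ := sum_le_two_mul T ρ hTmult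
  have : μ E = ⨆ (K : Set ℝ) (_ : K ⊆ E) (_ : IsCompact K), μ K :=
    hEopen.measure_eq_iSup_isCompact μ
  rw [this]
  simp_rw [ENNReal.mul_iSup]
  exact iSup_le fun K => iSup_le fun hKE => iSup_le fun hK => key K hK hKE

lemma q_preimage (μ ρ : Measure ℝ) (t : ℝ≥0∞) :
    {x : ℝ | t < ⨆ (a : ℝ) (b : ℝ) (_ : a < x) (_ : x < b), ρ (Ioo a b) / μ (Ioo a b)}
      = ⋃ (p : {p : ℝ × ℝ // t < ρ (Ioo p.1 p.2) / μ (Ioo p.1 p.2)}),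
          Ioo (p : ℝ × ℝ).1 (p : ℝ × ℝ).2 := by
  ext x
  simp only [mem_setOf_eq, mem_iUnion, Subtype.exists, Prod.exists, lt_iSup_iff]
  constructor
  · rintro ⟨a, b, h1, h2, h3⟩
    exact ⟨a, b, h3, h1, h2⟩
  · rintro ⟨a, b, h3, h1, h2⟩
    exact ⟨a, b, h1, h2, h3⟩

lemma q_measurable (μ ρ : Measure ℝ) :
    Measurable (fun x : ℝ => ⨆ (a : ℝ) (b : ℝ) (_ : a < x) (_ : x < b),
      ρ (Ioo a b) / μ (Ioo a b)) := by
  apply measurable_of_Ioi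
  intro t
  have : (fun x : ℝ => ⨆ (a : ℝ) (b : ℝ) (_ : a < x) (_ : x < b),
      ρ (Ioo a b) / μ (Ioo a b)) ⁻¹' Ioi t
      = {x : ℝ | t < ⨆ (a : ℝ) (b : ℝ) (_ : a < x) (_ : x < b), ρ (Ioo a b) / μ (Ioo a b)} := rfl
  rw [this, q_preimage]
  exact (isOpen_iUnion fun p => isOpen_Ioo).measurableSet

lemma q_level (μ₁ μ₂ : Measure ℝ) [IsProbabilityMeasure μ₁] [IsProbabilityMeasure μ₂]
    (hac : μ₂ ≪ μ₁) (t : ℝ≥0∞) :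
    t * μ₁ {x : ℝ | t < ⨆ (a : ℝ) (b : ℝ) (_ : a < x) (_ : x < b),
      μ₂ (Ioo a b) / μ₁ (Ioo a b)} ≤ 2 := by
  have hsub : {x : ℝ | t < ⨆ (a : ℝ) (b : ℝ) (_ : a < x) (_ : x < b),
      μ₂ (Ioo a b) / μ₁ (Ioo a b)}
      ⊆ {x | ∃ a b : ℝ, a < x ∧ x < b ∧ t * μ₁ (Ioo a b) < μ₂ (Ioo a b)} := by
    intro x hx
    simp only [mem_setOf_eq, lt_iSup_iff] at hx
    obtain ⟨a, b, h1, h2, h3⟩ := hx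
    refine ⟨a, b, h1, h2, ?_⟩
    by_cases hm : μ₁ (Ioo a b) = 0
    · exact absurd h3 (by simp [hac hm, ENNReal.zero_div])
    · exact (ENNReal.lt_div_iff_mul_lt (Or.inl hm)
        (Or.inl (measure_ne_top μ₁ _))).1 h3
  calc t * μ₁ _ ≤ t * μ₁ {x | ∃ a b : ℝ, a < x ∧ x < b ∧ t * μ₁ (Ioo a b) < μ₂ (Ioo a b)} :=
        mul_le_mul_right (measure_mono hsub) t
    _ ≤ 2 * μ₂ Set.univ := weak_bound μ₁ μ₂ t
    _ = 2 := by simp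

lemma null_nonsupport (μ : Measure ℝ) [IsFiniteMeasure μ] :
    ∀ᵐ x ∂μ, ∀ a b : ℝ, a < x → x < b → 0 < μ (Ioo a b) := by
  set U : Set ℝ := ⋃ (p : {p : ℚ × ℚ // μ (Ioo (p.1 : ℝ) (p.2 : ℝ)) = 0}),
    Ioo ((p : ℚ × ℚ).1 : ℝ) ((p : ℚ × ℚ).2 : ℝ) with hU
  have hUnull : μ U = 0 := by
    rw [hU]
    exact measure_iUnion_null fun p => p.2
  rw [ae_iff]
  refine measure_mono_null ?_ hUnull
  intro x hx
  simp only [mem_setOf_eq] at hx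
  push_neg at hx
  obtain ⟨a, b, hax, hxb, hab⟩ := hx
  obtain ⟨qa, hqa1, hqa2⟩ := exists_rat_btwn hax
  obtain ⟨qb, hqb1, hqb2⟩ := exists_rat_btwn hxb
  have hzero : μ (Ioo (qa : ℝ) (qb : ℝ)) = 0 := by
    refine le_antisymm (le_trans (measure_mono ?_) hab) zero_le
    exact Ioo_subset_Ioo hqa1.le hqb2.le
  exact mem_iUnion.2 ⟨⟨(qa, qb), hzero⟩, ⟨hqa2, hqb1⟩⟩

lemma core (μ₁ μ₂ : Measure ℝ) [IsProbabilityMeasure μ₁] [IsProbabilityMeasure μ₂]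
    (hac : μ₂ ≪ μ₁) (e : ℝ) (he : 0 < e) :
    ∀ᵐ x ∂μ₁, ∃ η > (0:ℝ), ∀ a b : ℝ, a < x → x < b → b - a < η →
      μ₂ (Ioo a b) / μ₁ (Ioo a b) ∈
        Icc (μ₂.rnDeriv μ₁ x - ENNReal.ofReal (3*e)) (μ₂.rnDeriv μ₁ x + ENNReal.ofReal (3*e)) := by
  set J := μ₂.rnDeriv μ₁ with hJ
  have hJm : Measurable J := Measure.measurable_rnDeriv μ₂ μ₁
  set Jt := fun x => (J x).toReal with hJt
  have hJtm : Measurable Jt := hJm.ennreal_toReal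
  have hJint : Integrable Jt μ₁ := Measure.integrable_toReal_rnDeriv
  have he6 : (ENNReal.ofReal e) ≠ 0 := by simp [ENNReal.ofReal_eq_zero, not_le, he]
  have he6t : (ENNReal.ofReal e) ≠ ⊤ := ENNReal.ofReal_ne_top
  rw [ae_iff]
  set Bad := {x : ℝ | ¬ ∃ η > (0:ℝ), ∀ a b : ℝ, a < x → x < b → b - a < η →
      μ₂ (Ioo a b) / μ₁ (Ioo a b) ∈
        Icc (J x - ENNReal.ofReal (3*e)) (J x + ENNReal.ofReal (3*e))} with hBad
  -- main quantitative bound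
  have key : ∀ δ : ℝ, 0 < δ → μ₁ Bad ≤ ENNReal.ofReal δ * (3 * (ENNReal.ofReal e)⁻¹) := by
    intro δ hδ
    obtain ⟨g, hgsupp, hgint, hgcont, hgig⟩ :=
      hJint.exists_hasCompactSupport_lintegral_sub_le
        (ε := ENNReal.ofReal δ) (by simp [ENNReal.ofReal_eq_zero, not_le, hδ])
    set hE := fun y : ℝ => (‖Jt y - g y‖₊ : ℝ≥0∞) with hhE
    have hhEm : Measurable hE := (hJtm.sub hgcont.measurable).nnnorm.coe_nnreal_ennreal
    set ρ := μ₁.withDensity hE with hρ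
    have hρuniv : ρ Set.univ ≤ ENNReal.ofReal δ := by
      rw [hρ, withDensity_apply _ MeasurableSet.univ, setLIntegral_univ]
      exact hgint
    have hρfin : IsFiniteMeasure ρ :=
      ⟨hρuniv.trans_lt ENNReal.ofReal_lt_top⟩
    -- uniform continuity of g
    obtain ⟨η, hηpos, hηe⟩ := Metric.uniformContinuous_iff.1
      (hgsupp.uniformContinuous_of_continuous hgcont) e he
    -- the good set
    set G1 := {x : ℝ | ∀ a b : ℝ, a < x → x < b → 0 < μ₁ (Ioo a b)} with hG1
    set G2 := {x : ℝ | J x ≠ ⊤} with hG2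
    set G3 := {x : ℝ | ¬ ∃ a b : ℝ, a < x ∧ x < b ∧
        ENNReal.ofReal e * μ₁ (Ioo a b) < ρ (Ioo a b)} with hG3
    set G4 := {x : ℝ | hE x < ENNReal.ofReal e} with hG4
    -- identity μ₂ I = ∫⁻ in I of ofReal ∘ Jt
    have hae : J =ᵐ[μ₁] fun y => ENNReal.ofReal (Jt y) := by
      filter_upwards [Measure.rnDeriv_lt_top μ₂ μ₁] with y hy
      rw [hJt]
      exact (ENNReal.ofReal_toReal hy.ne).symm
    have hμ₂I : ∀ a b : ℝ, μ₂ (Ioo a b) = ∫⁻ y in Ioo a b, ENNReal.ofReal (Jt y) ∂μ₁ := by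
      intro a b
      conv_lhs => rw [← Measure.withDensity_rnDeriv_eq μ₂ μ₁ hac]
      rw [withDensity_apply _ measurableSet_Ioo]
      exact lintegral_congr_ae (ae_restrict_of_ae hae)
    -- the core estimate on the good set
    have hgood : ∀ x ∈ G1 ∩ G2 ∩ G3 ∩ G4, x ∉ Bad := by
      rintro x ⟨⟨⟨hx1, hx2⟩, hx3⟩, hx4⟩
      simp only [hBad, mem_setOf_eq, not_not]
      refine ⟨η, hηpos, fun a b hax hxb hba => ?_⟩
      set I := Ioo a b with hI
      set m := μ₁ I with hm
      have hm0 : m ≠ 0 := (hx1 a b hax hxb).ne'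
      have hmt : m ≠ ⊤ := measure_ne_top μ₁ I
      have hxI : x ∈ I := ⟨hax, hxb⟩
      have hosc : ∀ y ∈ I, |g y - g x| < e := by
        intro y hy
        have : dist y x < η := by
          rw [Real.dist_eq]
          have h1 : y - x < b - a := by simp only [hI, mem_Ioo] at hy hxI; linarith [hy.1, hy.2, hxI.1, hxI.2]
          have h2 : x - y < b - a := by simp only [hI, mem_Ioo] at hy hxI; linarith [hy.1, hy.2, hxI.1, hxI.2]
          rw [abs_sub_lt_iff]; constructor <;> linarith
        have := hηe this
        rwa [Real.dist_eq] at this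
      have hρI : ρ I ≤ ENNReal.ofReal e * m := by
        by_contra hcon
        exact hx3 ⟨a, b, hax, hxb, not_le.1 hcon⟩
      have hρIint : ρ I = ∫⁻ y in I, hE y ∂μ₁ := withDensity_apply _ measurableSet_Ioo
      have hhEx : hE x ≤ ENNReal.ofReal e := hx4.le
      have hJx : J x = ENNReal.ofReal (Jt x) := (ENNReal.ofReal_toReal hx2).symm
      -- triangle inequalities (pointwise)
      have htri1 : ∀ y : ℝ, ENNReal.ofReal (Jt y) ≤ ENNReal.ofReal (g y) + hE y := by
        intro y
        calc ENNReal.ofReal (Jt y) ≤ ENNReal.ofReal (g y + |Jt y - g y|) := by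
              refine ENNReal.ofReal_le_ofReal ?_
              have := abs_sub_abs_le_abs_sub (Jt y) (g y)
              have h2 := le_abs_self (Jt y - g y)
              linarith [le_abs_self (g y), neg_abs_le (g y)]
          _ ≤ ENNReal.ofReal (g y) + ENNReal.ofReal |Jt y - g y| := ENNReal.ofReal_add_le
          _ = ENNReal.ofReal (g y) + hE y := by
              have : hE y = ENNReal.ofReal |Jt y - g y| := Real.enorm_eq_ofReal_abs _
              rw [this]
      have htri2 : ∀ y : ℝ, ENNReal.ofReal (g y) ≤ ENNReal.ofReal (Jt y) + hE y := by
        intro y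
        calc ENNReal.ofReal (g y) ≤ ENNReal.ofReal (Jt y + |Jt y - g y|) := by
              refine ENNReal.ofReal_le_ofReal ?_
              have h2 := neg_abs_le (Jt y - g y)
              linarith
          _ ≤ ENNReal.ofReal (Jt y) + ENNReal.ofReal |Jt y - g y| := ENNReal.ofReal_add_le
          _ = ENNReal.ofReal (Jt y) + hE y := by
              have : hE y = ENNReal.ofReal |Jt y - g y| := Real.enorm_eq_ofReal_abs _
              rw [this]
      -- upper bound
      have hupper : μ₂ I / m ≤ J x + ENNReal.ofReal (3*e) := by
        rw [ENNReal.div_le_iff_le_mul (Or.inl hm0) (Or.inl hmt)]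
        have step1 : μ₂ I ≤ ∫⁻ y in I, (ENNReal.ofReal (g y) + hE y) ∂μ₁ := by
          rw [hμ₂I a b]
          exact lintegral_mono fun y => htri1 y
        have step2 : ∫⁻ y in I, (ENNReal.ofReal (g y) + hE y) ∂μ₁
            = (∫⁻ y in I, ENNReal.ofReal (g y) ∂μ₁) + ρ I := by
          rw [lintegral_add_left (hgcont.measurable.ennreal_ofReal), hρIint]
        have step3 : ∫⁻ y in I, ENNReal.ofReal (g y) ∂μ₁ ≤ ENNReal.ofReal (g x + e) * m := by
          calc ∫⁻ y in I, ENNReal.ofReal (g y) ∂μ₁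
              ≤ ∫⁻ _ in I, ENNReal.ofReal (g x + e) ∂μ₁ := by
                refine setLIntegral_mono measurable_const fun y hy => ?_
                refine ENNReal.ofReal_le_ofReal ?_
                have := hosc y hy
                rw [abs_sub_lt_iff] at this
                linarith [this.1, this.2]
            _ = ENNReal.ofReal (g x + e) * m := setLIntegral_const _ _
        have hgx : ENNReal.ofReal (g x) ≤ J x + ENNReal.ofReal e := by
          rw [hJx]
          exact (htri2 x).trans (add_le_add_right hhEx _)
        calc μ₂ I ≤ ENNReal.ofReal (g x + e) * m + ρ I :=
              (step1.trans step2.le).trans (add_le_add_left step3 _)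
          _ ≤ ENNReal.ofReal (g x + e) * m + ENNReal.ofReal e * m := add_le_add_right hρI _
          _ = (ENNReal.ofReal (g x + e) + ENNReal.ofReal e) * m := (add_mul _ _ _).symm
          _ ≤ (J x + ENNReal.ofReal (3*e)) * m := by
              refine mul_le_mul_left ?_ m
              calc ENNReal.ofReal (g x + e) + ENNReal.ofReal e
                  ≤ ENNReal.ofReal (g x) + ENNReal.ofReal e + ENNReal.ofReal e :=
                    add_le_add_left ENNReal.ofReal_add_le _
                _ ≤ (J x + ENNReal.ofReal e) + ENNReal.ofReal e + ENNReal.ofReal e := by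
                    gcongr
                _ = J x + (ENNReal.ofReal e + ENNReal.ofReal e + ENNReal.ofReal e) := by ring
                _ = J x + ENNReal.ofReal (3*e) := by
                    rw [← ENNReal.ofReal_add he.le he.le, ← ENNReal.ofReal_add (by linarith) he.le]
                    ring_nf
      -- lower bound
      have hlower : J x - ENNReal.ofReal (3*e) ≤ μ₂ I / m := by
        rw [tsub_le_iff_right]
        have step1 : ENNReal.ofReal (g x) * m ≤ (∫⁻ y in I, ENNReal.ofReal (g y) ∂μ₁)
            + ENNReal.ofReal e * m := by
          calc ENNReal.ofReal (g x) * m = ∫⁻ _ in I, ENNReal.ofReal (g x) ∂μ₁ :=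
                (setLIntegral_const _ _).symm
            _ ≤ ∫⁻ y in I, (ENNReal.ofReal (g y) + ENNReal.ofReal e) ∂μ₁ := by
                refine setLIntegral_mono (hgcont.measurable.ennreal_ofReal.add measurable_const)
                  fun y hy => ?_
                calc ENNReal.ofReal (g x) ≤ ENNReal.ofReal (g y + e) := by
                      refine ENNReal.ofReal_le_ofReal ?_
                      have := hosc y hy
                      rw [abs_sub_lt_iff] at this
                      linarith [this.1, this.2]
                  _ ≤ ENNReal.ofReal (g y) + ENNReal.ofReal e := ENNReal.ofReal_add_le
            _ = (∫⁻ y in I, ENNReal.ofReal (g y) ∂μ₁) + ENNReal.ofReal e * m := by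
                rw [lintegral_add_right _ measurable_const, setLIntegral_const]
        have step2 : ∫⁻ y in I, ENNReal.ofReal (g y) ∂μ₁ ≤ μ₂ I + ENNReal.ofReal e * m := by
          calc ∫⁻ y in I, ENNReal.ofReal (g y) ∂μ₁
              ≤ ∫⁻ y in I, (ENNReal.ofReal (Jt y) + hE y) ∂μ₁ := lintegral_mono fun y => htri2 y
            _ = (∫⁻ y in I, ENNReal.ofReal (Jt y) ∂μ₁) + ρ I := by
                rw [lintegral_add_left (hJtm.ennreal_ofReal), hρIint]
            _ ≤ μ₂ I + ENNReal.ofReal e * m := by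
                rw [← hμ₂I a b]
                exact add_le_add_right hρI _
        have hcomb : ENNReal.ofReal (g x) * m ≤ μ₂ I + (ENNReal.ofReal e + ENNReal.ofReal e) * m := by
          calc ENNReal.ofReal (g x) * m
              ≤ (μ₂ I + ENNReal.ofReal e * m) + ENNReal.ofReal e * m :=
                step1.trans (add_le_add_left step2 _)
            _ = μ₂ I + (ENNReal.ofReal e + ENNReal.ofReal e) * m := by ring
        have hdiv : ENNReal.ofReal (g x) ≤ μ₂ I / m + (ENNReal.ofReal e + ENNReal.ofReal e) := by
          have h1 : ENNReal.ofReal (g x) ≤ (μ₂ I + (ENNReal.ofReal e + ENNReal.ofReal e) * m) / m :=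
            (ENNReal.le_div_iff_mul_le (Or.inl hm0) (Or.inl hmt)).2 hcomb
          refine h1.trans ?_
          rw [ENNReal.add_div]
          gcongr
          rw [mul_div_assoc, ENNReal.div_self hm0 hmt, mul_one]
        calc J x = ENNReal.ofReal (Jt x) := hJx
          _ ≤ ENNReal.ofReal (g x) + hE x := htri1 x
          _ ≤ (μ₂ I / m + (ENNReal.ofReal e + ENNReal.ofReal e)) + ENNReal.ofReal e :=
              add_le_add hdiv hhEx
          _ = μ₂ I / m + (ENNReal.ofReal e + ENNReal.ofReal e + ENNReal.ofReal e) := by ring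
          _ = μ₂ I / m + ENNReal.ofReal (3*e) := by
              rw [← ENNReal.ofReal_add he.le he.le, ← ENNReal.ofReal_add (by linarith) he.le]
              ring_nf
      exact ⟨hlower, hupper⟩
    -- measure bounds for the complements
    have hBadsub : Bad ⊆ (G1ᶜ ∪ G2ᶜ) ∪ (G3ᶜ ∪ G4ᶜ) := by
      intro x hx
      by_contra hcon
      simp only [mem_union, not_or, mem_compl_iff, not_not] at hcon
      exact hgood x ⟨⟨⟨hcon.1.1, hcon.1.2⟩, hcon.2.1⟩, hcon.2.2⟩ hx
    have hG1null : μ₁ G1ᶜ = 0 := by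
      have h := null_nonsupport μ₁
      rw [ae_iff] at h
      refine measure_mono_null (fun x hx => ?_) h
      simpa [hG1] using hx
    have hG2null : μ₁ G2ᶜ = 0 := by
      have := Measure.rnDeriv_lt_top μ₂ μ₁
      rw [ae_iff] at this
      refine measure_mono_null ?_ this
      intro x hx
      simp only [hG2, mem_compl_iff, mem_setOf_eq, not_not] at hx
      simp only [mem_setOf_eq, not_lt, top_le_iff]
      exact hx
    have hG3bound : μ₁ G3ᶜ ≤ 2 * ENNReal.ofReal δ * (ENNReal.ofReal e)⁻¹ := by
      have hw := weak_bound μ₁ ρ (ENNReal.ofReal e)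
      have : G3ᶜ = {x | ∃ a b : ℝ, a < x ∧ x < b ∧
          ENNReal.ofReal e * μ₁ (Ioo a b) < ρ (Ioo a b)} := by
        ext x; simp [hG3]
      rw [this]
      rw [mul_comm] at hw
      have h2 : μ₁ {x | ∃ a b : ℝ, a < x ∧ x < b ∧
          ENNReal.ofReal e * μ₁ (Ioo a b) < ρ (Ioo a b)} ≤ 2 * ρ Set.univ / ENNReal.ofReal e :=
        (ENNReal.le_div_iff_mul_le (Or.inl he6) (Or.inl he6t)).2 hw
      refine h2.trans ?_
      rw [div_eq_mul_inv]
      gcongr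
    have hG4bound : μ₁ G4ᶜ ≤ ENNReal.ofReal δ * (ENNReal.ofReal e)⁻¹ := by
      have : G4ᶜ = {x | ENNReal.ofReal e ≤ hE x} := by
        ext x; simp [hG4, not_lt]
      rw [this]
      have hm := meas_ge_le_lintegral_div (μ := μ₁) hhEm.aemeasurable he6 he6t
      refine hm.trans ?_
      rw [div_eq_mul_inv]
      gcongr
      exact hgint
    calc μ₁ Bad ≤ μ₁ ((G1ᶜ ∪ G2ᶜ) ∪ (G3ᶜ ∪ G4ᶜ)) := measure_mono hBadsub
      _ ≤ μ₁ (G1ᶜ ∪ G2ᶜ) + μ₁ (G3ᶜ ∪ G4ᶜ) := measure_union_le _ _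
      _ ≤ (μ₁ G1ᶜ + μ₁ G2ᶜ) + (μ₁ G3ᶜ + μ₁ G4ᶜ) :=
          add_le_add (measure_union_le _ _) (measure_union_le _ _)
      _ ≤ (0 + 0) + (2 * ENNReal.ofReal δ * (ENNReal.ofReal e)⁻¹
            + ENNReal.ofReal δ * (ENNReal.ofReal e)⁻¹) :=
          add_le_add (add_le_add hG1null.le hG2null.le) (add_le_add hG3bound hG4bound)
      _ = ENNReal.ofReal δ * (3 * (ENNReal.ofReal e)⁻¹) := by ring
  -- conclude μ₁ Bad = 0
  by_contra hcon
  have hpos : 0 < μ₁ Bad := pos_iff_ne_zero.2 hcon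
  set K := 3 * (ENNReal.ofReal e)⁻¹ with hK
  have hK0 : K ≠ 0 := by
    simp [hK, ENNReal.inv_ne_zero, he6t]
  have hKt : K ≠ ⊤ := by
    simp [hK, ENNReal.inv_ne_top, he6, ENNReal.mul_eq_top]
  set mq := μ₁ Bad / K with hmq
  have hmq0 : mq ≠ 0 := by
    simp only [hmq, ne_eq, ENNReal.div_eq_zero_iff, not_or]
    exact ⟨hcon, hKt⟩
  have hmqt : mq ≠ ⊤ := by
    rw [hmq, div_eq_mul_inv]
    exact ENNReal.mul_ne_top (measure_ne_top μ₁ _) (ENNReal.inv_ne_top.2 hK0)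
  set δ := mq.toReal / 2 with hδ
  have hδpos : 0 < δ := by
    have := ENNReal.toReal_pos hmq0 hmqt
    positivity
  have hlt : ENNReal.ofReal δ < mq := by
    rw [ENNReal.ofReal_lt_iff_lt_toReal hδpos.le hmqt]
    rw [hδ]
    have := ENNReal.toReal_pos hmq0 hmqt
    linarith
  have hle : μ₁ Bad ≤ ENNReal.ofReal δ * K := key δ hδpos
  have h2 : ENNReal.ofReal δ * K < mq * K :=
    (ENNReal.mul_lt_mul_iff_left hK0 hKt).2 hlt
  rw [hmq, ENNReal.div_mul_cancel hK0 hKt] at h2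
  exact absurd hle (not_le.2 h2)

lemma part1 (μ₁ μ₂ : Measure ℝ) [IsProbabilityMeasure μ₁] [IsProbabilityMeasure μ₂]
    (hac : μ₂ ≪ μ₁) :
    ∀ᵐ x ∂μ₁, ∀ ε : ENNReal, 0 < ε → ∃ η > (0 : ℝ), ∀ a b : ℝ,
      a < x → x < b → b - a < η →
        μ₂ (Set.Ioo a b) / μ₁ (Set.Ioo a b) ∈
          Set.Icc (μ₂.rnDeriv μ₁ x - ε) (μ₂.rnDeriv μ₁ x + ε) := by
  have hcore : ∀ n : ℕ, ∀ᵐ x ∂μ₁, ∃ η > (0:ℝ), ∀ a b : ℝ, a < x → x < b → b - a < η →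
      μ₂ (Ioo a b) / μ₁ (Ioo a b) ∈
        Icc (μ₂.rnDeriv μ₁ x - ENNReal.ofReal (3*(1/(3*((n:ℝ)+1)))))
          (μ₂.rnDeriv μ₁ x + ENNReal.ofReal (3*(1/(3*((n:ℝ)+1))))) :=
    fun n => core μ₁ μ₂ hac (1/(3*((n:ℝ)+1))) (by positivity)
  filter_upwards [ae_all_iff.2 hcore] with x hx
  intro ε hε
  obtain ⟨n, hn⟩ : ∃ n : ℕ, ENNReal.ofReal (3*(1/(3*((n:ℝ)+1)))) ≤ ε := by
    by_cases hεt : ε = ⊤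
    · exact ⟨0, hεt ▸ le_top⟩
    · obtain ⟨n, hn⟩ := ENNReal.exists_inv_nat_lt hε.ne'
      refine ⟨n, le_trans ?_ hn.le⟩
      have h1 : 3*(1/(3*((n:ℝ)+1))) = ((n:ℝ)+1)⁻¹ := by
        field_simp
      rw [h1, ENNReal.ofReal_inv_of_pos (by positivity)]
      have h2 : ENNReal.ofReal ((n:ℝ)+1) = (n : ℝ≥0∞) + 1 := by
        rw [ENNReal.ofReal_add (by positivity) zero_le_one]
        simp [ENNReal.ofReal_natCast]
      rw [h2]
      exact ENNReal.inv_le_inv' (le_add_of_nonneg_right zero_le_one)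
  obtain ⟨η, hη, hest⟩ := hx n
  refine ⟨η, hη, fun a b h1 h2 h3 => ?_⟩
  exact Icc_subset_Icc (tsub_le_tsub_left hn _) (add_le_add_right hn _) (hest a b h1 h2 h3)

section
variable (μ₁ μ₂ : Measure ℝ) [IsProbabilityMeasure μ₁] [IsProbabilityMeasure μ₂]
    (hac : μ₂ ≪ μ₁)

local notation "q" => fun x : ℝ => ⨆ (a : ℝ) (b : ℝ) (_ : a < x) (_ : x < b),
      μ₂ (Ioo a b) / μ₁ (Ioo a b)

include hac

lemma part2 : ∀ᵐ x ∂μ₁, q x < ⊤ := by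
  rw [ae_iff]
  have hsub : ∀ n : ℕ, {x : ℝ | ¬ q x < ⊤} ⊆ {x : ℝ | (n : ℝ≥0∞) < q x} := by
    intro n x hx
    simp only [mem_setOf_eq, not_lt, top_le_iff] at hx
    simp [mem_setOf_eq, hx]
  by_contra hc
  have hbound : ∀ n : ℕ, (n : ℝ≥0∞) * μ₁ {x : ℝ | ¬ q x < ⊤} ≤ 2 := fun n =>
    (mul_le_mul_right (measure_mono (hsub n)) _).trans (q_level μ₁ μ₂ hac n)
  set c := μ₁ {x : ℝ | ¬ q x < ⊤} with hc'
  have hcpos : 0 < c := pos_iff_ne_zero.2 hc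
  have hctop : c ≤ 1 := prob_le_one
  have hdivtop : 2 / c ≠ ⊤ := by
    simp only [Ne, ENNReal.div_eq_top]
    push_neg
    exact ⟨fun _ => hcpos.ne', fun h => absurd h (by norm_num)⟩
  obtain ⟨n, hn⟩ := ENNReal.exists_nat_gt hdivtop
  have h2 : 2 < (n : ℝ≥0∞) * c := by
    rw [ENNReal.div_lt_iff (Or.inl hcpos.ne') (Or.inl (hctop.trans_lt ENNReal.one_lt_top).ne)] at hn
    exact hn
  exact absurd (hbound n) (not_le.2 h2)

lemma part3 : Integrable (fun x => max (Real.log ((q x).toReal)) 0) μ₁ := by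
  have hqm : Measurable (fun x : ℝ => q x) := q_measurable μ₁ μ₂
  set g := fun x : ℝ => max (Real.log ((q x).toReal)) 0 with hg
  have hgm : Measurable g :=
    (Real.measurable_log.comp hqm.ennreal_toReal).max measurable_const
  have hg0 : ∀ x, 0 ≤ g x := fun x => le_max_right _ _
  -- level sets
  set E : ℕ → Set ℝ := fun n => {x : ℝ | ENNReal.ofReal (Real.exp n) < q x} with hE
  have hEm : ∀ n, MeasurableSet (E n) := fun n => hqm measurableSet_Ioi
  have hEbound : ∀ n : ℕ, μ₁ (E n) ≤ ENNReal.ofReal (2 * Real.exp (-(n:ℝ))) := by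
    intro n
    have ht0 : ENNReal.ofReal (Real.exp n) ≠ 0 := by
      simp [ENNReal.ofReal_eq_zero, not_le, Real.exp_pos]
    have httop : ENNReal.ofReal (Real.exp n) ≠ ⊤ := ENNReal.ofReal_ne_top
    have := q_level μ₁ μ₂ hac (ENNReal.ofReal (Real.exp n))
    rw [mul_comm] at this
    have h2 : μ₁ (E n) ≤ 2 / ENNReal.ofReal (Real.exp n) :=
      ENNReal.le_div_iff_mul_le (Or.inl ht0) (Or.inl httop) |>.2 this
    refine h2.trans (le_of_eq ?_)
    rw [show (2 : ℝ≥0∞) = ENNReal.ofReal 2 by norm_num,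
      ← ENNReal.ofReal_div_of_pos (Real.exp_pos _)]
    congr 1
    rw [Real.exp_neg]
    field_simp
  -- pointwise bound
  have hpoint : ∀ x, ENNReal.ofReal (g x) ≤ ∑' n : ℕ, (E n).indicator (fun _ => (1:ℝ≥0∞)) x := by
    intro x
    by_cases htop : q x = ⊤
    · simp [hg, htop]
    by_cases hlog : Real.log ((q x).toReal) ≤ 0
    · simp [hg, max_eq_right hlog]
    push_neg at hlog
    set r := (q x).toReal with hr
    have hr1 : 1 < r := by
      by_contra h
      push_neg at h
      exact absurd (Real.log_nonpos (by positivity) h) (not_le.2 hlog)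
    set N := ⌈Real.log r⌉₊ with hN
    have hmem : ∀ n : ℕ, n < N → x ∈ E n := by
      intro n hn
      have h1 : (n : ℝ) < Real.log r := Nat.lt_ceil.1 hn
      have h2 : Real.exp n < r := by
        calc Real.exp n < Real.exp (Real.log r) := Real.exp_lt_exp.2 h1
          _ = r := Real.exp_log (by linarith)
      simp only [hE, mem_setOf_eq]
      calc ENNReal.ofReal (Real.exp n) < ENNReal.ofReal r :=
            (ENNReal.ofReal_lt_ofReal_iff (by linarith)).2 h2
        _ = q x := ENNReal.ofReal_toReal htop
    have hsum : (N : ℝ≥0∞) ≤ ∑' n : ℕ, (E n).indicator (fun _ => (1:ℝ≥0∞)) x := by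
      have : ∀ n ∈ Finset.range N, (E n).indicator (fun _ => (1:ℝ≥0∞)) x = 1 := by
        intro n hn
        simp [Set.indicator_of_mem (hmem n (Finset.mem_range.1 hn))]
      calc (N : ℝ≥0∞) = ∑ n ∈ Finset.range N, (E n).indicator (fun _ => (1:ℝ≥0∞)) x := by
            rw [Finset.sum_congr rfl this]; simp
        _ ≤ ∑' n : ℕ, (E n).indicator (fun _ => (1:ℝ≥0∞)) x := ENNReal.sum_le_tsum _
    refine le_trans ?_ hsum
    have : g x = Real.log r := max_eq_left hlog.le
    rw [this]
    calc ENNReal.ofReal (Real.log r) ≤ ENNReal.ofReal (N : ℝ) :=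
          ENNReal.ofReal_le_ofReal (Nat.le_ceil _)
      _ = (N : ℝ≥0∞) := ENNReal.ofReal_natCast N
  -- lintegral bound
  have hlint : ∫⁻ x, ENNReal.ofReal (g x) ∂μ₁ < ⊤ := by
    calc ∫⁻ x, ENNReal.ofReal (g x) ∂μ₁
        ≤ ∫⁻ x, ∑' n : ℕ, (E n).indicator (fun _ => (1:ℝ≥0∞)) x ∂μ₁ := lintegral_mono hpoint
      _ = ∑' n : ℕ, ∫⁻ x, (E n).indicator (fun _ => (1:ℝ≥0∞)) x ∂μ₁ :=
          lintegral_tsum fun n => (measurable_const.indicator (hEm n)).aemeasurable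
      _ = ∑' n : ℕ, μ₁ (E n) := by
          refine tsum_congr fun n => ?_
          rw [lintegral_indicator (hEm n)]
          simp
      _ ≤ ∑' n : ℕ, ENNReal.ofReal (2 * Real.exp (-(n:ℝ))) := ENNReal.tsum_le_tsum hEbound
      _ < ⊤ := by
          have hsummable : Summable (fun n : ℕ => 2 * Real.exp (-(n:ℝ))) := by
            have : ∀ n : ℕ, 2 * Real.exp (-(n:ℝ)) = 2 * (Real.exp (-1))^n := by
              intro n
              rw [← Real.exp_nat_mul]
              norm_num
            rw [funext this]
            exact (summable_geometric_of_lt_one (Real.exp_pos _).le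
              (Real.exp_lt_one_iff.2 (by norm_num))).mul_left 2
          rw [← ENNReal.ofReal_tsum_of_nonneg (fun n => by positivity) hsummable]
          exact ENNReal.ofReal_lt_top
  refine ⟨hgm.aestronglyMeasurable, ?_⟩
  rw [hasFiniteIntegral_iff_ofReal (Filter.Eventually.of_forall hg0)]
  exact hlint

end
end Aux

/-- Differentiation of measures on `ℝ`: if `μ₂ ≪ μ₁`, then `μ₁`-a.e. the ratio
`μ₂(I)/μ₁(I)` over open intervals `I ∋ x` with `|I| → 0` converges to the
Radon–Nikodym derivative, and moreover `log⁺` of the maximal ratio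
`q(x) = sup { μ₂(I)/μ₁(I) : I open interval, x ∈ I }` is `μ₁`-integrable
(in particular `q` is `μ₁`-a.e. finite). -/
theorem stmt9 (μ₁ μ₂ : Measure ℝ) [IsProbabilityMeasure μ₁] [IsProbabilityMeasure μ₂]
    (hac : μ₂ ≪ μ₁) :
    (∀ᵐ x ∂μ₁, ∀ ε : ENNReal, 0 < ε → ∃ η > (0 : ℝ), ∀ a b : ℝ,
      a < x → x < b → b - a < η →
        μ₂ (Set.Ioo a b) / μ₁ (Set.Ioo a b) ∈
          Set.Icc (μ₂.rnDeriv μ₁ x - ε) (μ₂.rnDeriv μ₁ x + ε)) ∧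
    (∀ᵐ x ∂μ₁,
      (⨆ (a : ℝ) (b : ℝ) (_ : a < x) (_ : x < b),
        μ₂ (Set.Ioo a b) / μ₁ (Set.Ioo a b)) < ⊤) ∧
    Integrable (fun x => max (Real.log
      ((⨆ (a : ℝ) (b : ℝ) (_ : a < x) (_ : x < b),
        μ₂ (Set.Ioo a b) / μ₁ (Set.Ioo a b)).toReal)) 0) μ₁ := by
  exact ⟨part1 μ₁ μ₂ hac, part2 μ₁ μ₂ hac, part3 μ₁ μ₂ hac⟩
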